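/- For any self-adjoint generalized ring A, the set ESpec(A) of stable primes is dense in spec(A) for the Zariski topology: for every a ∈ A_{[1]}, the basic open set D_a is empty if and only if D_a ∩ ESpec(A) is empty (both being equivalent to a being nilpotent). -/

import Mathlib

open scoped Classical

noncomputable section

/-! ### Partially defined maps of finite sets -/

/-- Composition of partially defined maps of sets (`Set_•`). -/
def pcomp {X Y Z : Type} (g : Y → Option Z) (f : X → Option Y) : X → Option Z :=
  fun x => (f x).bind g

/-- The fiber of a partially defined map over a point of the target. -/
abbrev pfib {X Y : Type} (f : X → Option Y) (y : Y) : Type := {x : X // f x = some y}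

/-- The fiber of the identity partial map over `x` is a singleton. -/
def idFiberEquiv {X : Type} (x : X) : Fin 1 ≃ pfib (fun x' : X => some x') x where
  toFun _ := ⟨x, rfl⟩
  invFun _ := 0
  left_inv _ := Subsingleton.elim _ _
  right_inv p := Subtype.ext (Option.some.inj p.2).symm

/-- The fiber of the constant (total) map to the point `[1]` is everything. -/
def constFiberEquiv (X : Type) (z : Fin 1) :
    X ≃ pfib (fun _ : X => some (0 : Fin 1)) z where
  toFun x := ⟨x, congrArg some (Subsingleton.elim (0 : Fin 1) z)⟩
  invFun p := p.1
  left_inv _ := rfl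
  right_inv p := rfl

/-- The fiber of (the graph of) a bijection is a singleton. -/
def equivFiberEquiv {X Y : Type} (e : X ≃ Y) (y : Y) :
    Fin 1 ≃ pfib (fun x : X => some (e x)) y where
  toFun _ := ⟨e.symm y, congrArg some (e.apply_symm_apply y)⟩
  invFun _ := 0
  left_inv _ := Subsingleton.elim _ _
  right_inv p := Subtype.ext ((Equiv.symm_apply_eq e).mpr (Option.some.inj p.2).symm)

/-- The fiber of the map `[1] → X` with image `{x}` over `x' = x` is a singleton. -/
def pointFiberEquiv {X : Type} {x x' : X} (h : x = x') :
    Fin 1 ≃ pfib (fun _ : Fin 1 => some x) x' where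
  toFun z := ⟨z, congrArg some h⟩
  invFun p := p.1
  left_inv _ := rfl
  right_inv p := rfl

/-- Restriction of `f` to the fiber of `pcomp g f` over `z`, as a partial map into
the fiber of `g` over `z`. -/
def resMap {X Y Z : Type} (g : Y → Option Z) (f : X → Option Y) (z : Z) :
    pfib (pcomp g f) z → Option (pfib g z) :=
  fun x => (f x.1).bind fun y => if h : g y = some z then some ⟨y, h⟩ else none

/-- Identification of the fibers of the restriction `resMap g f z` with fibers of `f`. -/
def resFiberEquiv {X Y Z : Type} (g : Y → Option Z) (f : X → Option Y) (z : Z)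
    (p : pfib g z) : pfib f p.1 ≃ pfib (resMap g f z) p where
  toFun x := ⟨⟨x.1, by show (f x.1).bind g = some z; rw [x.2, Option.bind_some, p.2]⟩, by
    show (f x.1).bind _ = some p
    rw [x.2, Option.bind_some, dif_pos p.2]⟩
  invFun q := ⟨q.1.1, by
    have h := q.2
    unfold resMap at h
    rcases hf : f q.1.1 with _ | y
    · rw [hf, Option.bind_none] at h
      exact nomatch h
    · rw [hf, Option.bind_some] at h
      by_cases hg : g y = some z
      · rw [dif_pos hg] at h
        have hy : y = p.1 := congrArg Subtype.val (Option.some.inj h)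
        exact congrArg some hy
      · rw [dif_neg hg] at h
        exact nomatch h⟩
  left_inv x := Subtype.ext rfl
  right_inv q := Subtype.ext (Subtype.ext rfl)

/-! ### Fibered products -/

/-- The fibered product of two partial maps `g : Z ⇀ Y` and `f : X ⇀ Y`. -/
abbrev FP {X Y Z : Type} (g : Z → Option Y) (f : X → Option Y) : Type :=
  {p : Z × X // ∃ y : Y, g p.1 = some y ∧ f p.2 = some y}

/-- First projection of the fibered product, as a partial map. -/
def fpFst {X Y Z : Type} (g : Z → Option Y) (f : X → Option Y) : FP g f → Option Z :=
  fun p => some p.1.1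

/-- Second projection of the fibered product, as a partial map. -/
def fpSnd {X Y Z : Type} (g : Z → Option Y) (f : X → Option Y) : FP g f → Option X :=
  fun p => some p.1.2

/-- Identification of the fiber of the second projection of `Z ×_Y X` over `x`
with the fiber of `g` over `f x`. -/
def fpFiberSnd {X Y Z : Type} (g : Z → Option Y) (f : X → Option Y) {x : X} {y : Y}
    (hy : f x = some y) : pfib g y ≃ pfib (fpSnd g f) x where
  toFun w := ⟨⟨(w.1, x), ⟨y, w.2, hy⟩⟩, rfl⟩
  invFun q := ⟨q.1.1.1, by
    obtain ⟨y', hg, hf⟩ := q.1.2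
    have hx : q.1.1.2 = x := Option.some.inj q.2
    rw [hx] at hf
    have hyy : y' = y := Option.some.inj (hf.symm.trans hy)
    rw [hyy] at hg
    exact hg⟩
  left_inv w := Subtype.ext rfl
  right_inv q := by
    apply Subtype.ext
    apply Subtype.ext
    have hx : q.1.1.2 = x := Option.some.inj q.2
    exact Prod.ext rfl hx.symm

/-- Identification of the fiber of the first projection of `Z ×_Y X` over `z`
with the fiber of `f` over `g z`. -/
def fpFiberFst {X Y Z : Type} (g : Z → Option Y) (f : X → Option Y) {z : Z} {y : Y}
    (hy : g z = some y) : pfib f y ≃ pfib (fpFst g f) z where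
  toFun w := ⟨⟨(z, w.1), ⟨y, hy, w.2⟩⟩, rfl⟩
  invFun q := ⟨q.1.1.2, by
    obtain ⟨y', hg, hf⟩ := q.1.2
    have hz : q.1.1.1 = z := Option.some.inj q.2
    rw [hz] at hg
    have hyy : y' = y := Option.some.inj (hg.symm.trans hy)
    rw [hyy] at hf
    exact hf⟩
  left_inv w := Subtype.ext rfl
  right_inv q := by
    apply Subtype.ext
    apply Subtype.ext
    have hz : q.1.1.1 = z := Option.some.inj q.2
    exact Prod.ext hz.symm rfl
/-! ### Generalized rings

A generalized ring assigns to each finite set `X` a pointed set `A X`, functorially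
with respect to bijections (and hence, via the operations and units, with respect to
all partial bijections of finite sets), together with operations of multiplication
`∘ : A Y × A f → A X` and contraction `( , ) : A X × A f → A Y` for every partially
defined map `f : X ⇀ Y`, where `A f = ∏_{y ∈ Y} A (f⁻¹ y)`, and a unit `1 ∈ A [1]`,
subject to the axioms of associativity, left- and right-adjunction, left- and
right-linearity, and the unit axioms. -/

/-- The data underlying a generalized ring. -/
structure GenRingData where
  /-- the pointed set attached to a finite set `X` -/
  A : (X : Type) → [inst : Finite X] → Type
  /-- the base point `0_X ∈ A_X` -/
  zero : (X : Type) → [inst : Finite X] → A X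
  /-- the unit `1 ∈ A_{[1]}` -/
  one : A (Fin 1)
  /-- functoriality with respect to bijections of finite sets -/
  map : {X Y : Type} → [inst : Finite X] → [inst' : Finite Y] → (X ≃ Y) → A X → A Y
  /-- multiplication `∘ : A_Y × A_f → A_X` for a partially defined map `f : X ⇀ Y` -/
  mul : {X Y : Type} → [inst : Finite X] → [inst' : Finite Y] → (f : X → Option Y) →
      A Y → ((y : Y) → A (pfib f y)) → A X
  /-- contraction `( , ) : A_X × A_f → A_Y` for a partially defined map `f : X ⇀ Y` -/
  contr : {X Y : Type} → [inst : Finite X] → [inst' : Finite Y] → (f : X → Option Y) →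
      A X → ((y : Y) → A (pfib f y)) → A Y

namespace GenRingData

variable (R : GenRingData)

/-- The unit family `1_{id_X} ∈ A_{id_X}`. -/
def oneId (X : Type) [Finite X] : (x : X) → R.A (pfib (fun x' : X => some x') x) :=
  fun x => R.map (idFiberEquiv x) R.one

/-- The monoid operation `a ∘ b` on `A_{[1]}`. -/
def op (a b : R.A (Fin 1)) : R.A (Fin 1) :=
  R.mul (fun z : Fin 1 => some z) a (fun z => R.map (idFiberEquiv z) b)

/-- The `n`-fold power `a ∘ ⋯ ∘ a` in the monoid `A_{[1]}` (with `a⁰ = 1`). -/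
def opPow (a : R.A (Fin 1)) : ℕ → R.A (Fin 1)
  | 0 => R.one
  | n + 1 => R.op a (opPow a n)

/-- The left action `s ∘ a` of `A_{[1]}` on `A_X` (operation (1.2.5)). -/
def lact {X : Type} [Finite X] (s : R.A (Fin 1)) (a : R.A X) : R.A X :=
  R.mul (fun _ : X => some (0 : Fin 1)) s (fun z => R.map (constFiberEquiv X z) a)

/-- The pairing `(a, d) : A_X × A_X → A_{[1]}` (operation (1.2.6)). -/
def pair {X : Type} [Finite X] (a d : R.A X) : R.A (Fin 1) :=
  R.contr (fun _ : X => some (0 : Fin 1)) a (fun z => R.map (constFiberEquiv X z) d)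

/-- The right (diagonal) action `b ∘ c` of `(A_{[1]})^X` on `A_X` (operation (1.2.7)). -/
def ract {X : Type} [Finite X] (b : R.A X) (c : X → R.A (Fin 1)) : R.A X :=
  R.mul (fun x : X => some x) b (fun x => R.map (idFiberEquiv x) (c x))

/-- The involution `a ↦ aᵗ = (1, a)` of `A_{[1]}`. -/
def adj (a : R.A (Fin 1)) : R.A (Fin 1) := R.pair R.one a

/-- The element `(a, 1_{j_x}) ∈ A_X` obtained from `a ∈ A_{[1]}` via the
inclusion `j_x : {x} ↪ X`; for `a = 1` this is the image `1_x` of the unit. -/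
def pointElt (X : Type) [Finite X] (x : X) (a : R.A (Fin 1)) : R.A X :=
  R.contr (fun _ : Fin 1 => some x) a
    (fun x' => if h : x = x' then R.map (pointFiberEquiv h) R.one else R.zero _)

/-- The extended multiplication `A_g × A_f → A_{g∘f}`, defined fiberwise. -/
def emul {X Y Z : Type} [Finite X] [Finite Y] [Finite Z]
    (g : Y → Option Z) (f : X → Option Y)
    (c : (z : Z) → R.A (pfib g z)) (b : (y : Y) → R.A (pfib f y)) :
    (z : Z) → R.A (pfib (pcomp g f) z) :=
  fun z => R.mul (resMap g f z) (c z) (fun p => R.map (resFiberEquiv g f z p) (b p.1))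

/-- The extended contraction `A_{g∘f} × A_f → A_g`, defined fiberwise. -/
def econtr {X Y Z : Type} [Finite X] [Finite Y] [Finite Z]
    (g : Y → Option Z) (f : X → Option Y)
    (a : (z : Z) → R.A (pfib (pcomp g f) z)) (b : (y : Y) → R.A (pfib f y)) :
    (z : Z) → R.A (pfib g z) :=
  fun z => R.contr (resMap g f z) (a z) (fun p => R.map (resFiberEquiv g f z p) (b p.1))

/-- The pullback `ã ∈ A_{g̃}` of `a ∈ A_g` along the fibered product (used in
the right-linearity axiom). -/
def atilde {X Y Z : Type} [Finite X] [Finite Y] [Finite Z]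
    (g : Z → Option Y) (f : X → Option Y) (a : (y : Y) → R.A (pfib g y)) :
    (x : X) → R.A (pfib (fpSnd g f) x) :=
  fun x =>
    match hfx : f x with
    | some y => R.map (fpFiberSnd g f hfx) (a y)
    | none => R.zero _

/-- The pullback `c̃ ∈ A_{f̃}` of `c ∈ A_f` along the fibered product (used in
the right-linearity axiom). -/
def ctilde {X Y Z : Type} [Finite X] [Finite Y] [Finite Z]
    (g : Z → Option Y) (f : X → Option Y) (c : (y : Y) → R.A (pfib f y)) :
    (z : Z) → R.A (pfib (fpFst g f) z) :=
  fun z =>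
    match hgz : g z with
    | some y => R.map (fpFiberFst g f hgz) (c y)
    | none => R.zero _

end GenRingData

/-- A generalized ring: the data of `GenRingData` subject to the axioms
(pointedness, functoriality, zero laws, associativity, left/right adjunction,
left/right linearity, and the unit axioms, the latter in their reduced form over
the one-point base, which is equivalent to the general form). -/
structure GenRing where
  /-- the underlying data -/
  data : GenRingData
  /-- `A_∅ = {0}` -/
  isEmpty_eq_zero : ∀ (X : Type) [Finite X] [IsEmpty X] (a : data.A X), a = data.zero X
  /-- functoriality: identity -/
  map_refl : ∀ (X : Type) [Finite X] (a : data.A X), data.map (Equiv.refl X) a = a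
  /-- functoriality: composition -/
  map_trans : ∀ {X Y Z : Type} [Finite X] [Finite Y] [Finite Z] (e : X ≃ Y) (e' : Y ≃ Z)
      (a : data.A X), data.map (e.trans e') a = data.map e' (data.map e a)
  /-- functoriality: the maps are pointed -/
  map_zero : ∀ {X Y : Type} [Finite X] [Finite Y] (e : X ≃ Y),
      data.map e (data.zero X) = data.zero Y
  /-- `0 ∘ b = 0` -/
  mul_zero_left : ∀ {X Y : Type} [Finite X] [Finite Y] (f : X → Option Y)
      (b : (y : Y) → data.A (pfib f y)), data.mul f (data.zero Y) b = data.zero X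
  /-- `a ∘ 0_f = 0` -/
  mul_zero_right : ∀ {X Y : Type} [Finite X] [Finite Y] (f : X → Option Y) (a : data.A Y),
      data.mul f a (fun y => data.zero (pfib f y)) = data.zero X
  /-- `(0, b) = 0` -/
  contr_zero_left : ∀ {X Y : Type} [Finite X] [Finite Y] (f : X → Option Y)
      (b : (y : Y) → data.A (pfib f y)), data.contr f (data.zero X) b = data.zero Y
  /-- `(a, 0_f) = 0` -/
  contr_zero_right : ∀ {X Y : Type} [Finite X] [Finite Y] (f : X → Option Y) (a : data.A X),
      data.contr f a (fun y => data.zero (pfib f y)) = data.zero Y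
  /-- associativity: `d ∘ (c ∘ b) = (d ∘ c) ∘ b` -/
  assoc : ∀ {X Y Z : Type} [Finite X] [Finite Y] [Finite Z]
      (g : Y → Option Z) (f : X → Option Y) (d : data.A Z)
      (c : (z : Z) → data.A (pfib g z)) (b : (y : Y) → data.A (pfib f y)),
      data.mul (pcomp g f) d (data.emul g f c b) = data.mul f (data.mul g d c) b
  /-- left-adjunction: `(d, a ∘ c) = ((d, c), a)` -/
  left_adj : ∀ {X Y Z : Type} [Finite X] [Finite Y] [Finite Z]
      (g : Y → Option Z) (f : X → Option Y) (d : data.A X)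
      (a : (z : Z) → data.A (pfib g z)) (c : (y : Y) → data.A (pfib f y)),
      data.contr (pcomp g f) d (data.emul g f a c) = data.contr g (data.contr f d c) a
  /-- right-adjunction: `(d ∘ c, a) = (d, (a, c))` -/
  right_adj : ∀ {X Y Z : Type} [Finite X] [Finite Y] [Finite Z]
      (g : Y → Option Z) (f : X → Option Y) (d : data.A Y)
      (a : (z : Z) → data.A (pfib (pcomp g f) z)) (c : (y : Y) → data.A (pfib f y)),
      data.contr (pcomp g f) (data.mul f d c) a = data.contr g d (data.econtr g f a c)
  /-- left-linearity: `(d ∘ a, c) = d ∘ (a, c)` -/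
  left_lin : ∀ {X Y Z : Type} [Finite X] [Finite Y] [Finite Z]
      (g : Y → Option Z) (f : X → Option Y) (d : data.A Z)
      (a : (z : Z) → data.A (pfib (pcomp g f) z)) (c : (y : Y) → data.A (pfib f y)),
      data.contr f (data.mul (pcomp g f) d a) c = data.mul g d (data.econtr g f a c)
  /-- right-linearity: `(d, c) ∘ a = (d ∘ ã, c̃)`, with `ã`, `c̃` the pullbacks
  along the fibered product `Z ×_Y X` -/
  right_lin : ∀ {X Y Z : Type} [Finite X] [Finite Y] [Finite Z]
      (g : Z → Option Y) (f : X → Option Y) (d : data.A X)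
      (a : (y : Y) → data.A (pfib g y)) (c : (y : Y) → data.A (pfib f y)),
      data.mul g (data.contr f d c) a
        = data.contr (fpFst g f) (data.mul (fpSnd g f) d (data.atilde g f a))
            (data.ctilde g f c)
  /-- unit axiom: `a ∘ 1_{id_X} = a` -/
  mul_one_id : ∀ (X : Type) [Finite X] (a : data.A X),
      data.mul (fun x : X => some x) a (data.oneId X) = a
  /-- unit axiom: `1 ∘ a = a` -/
  one_lact : ∀ (X : Type) [Finite X] (a : data.A X), data.lact data.one a = a
  /-- unit axiom: `(a, 1_{id_X}) = a` -/
  contr_one_id : ∀ (X : Type) [Finite X] (a : data.A X),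
      data.contr (fun x : X => some x) a (data.oneId X) = a
  /-- unit axiom (1.8.11): `(a, 1_f) = f_A(a)` for a bijection `f = e` -/
  map_eq_contr : ∀ {X Y : Type} [Finite X] [Finite Y] (e : X ≃ Y) (a : data.A X),
      data.contr (fun x : X => some (e x)) a
        (fun y => data.map (equivFiberEquiv e y) data.one) = data.map e a
  /-- unit axiom (1.8.11): `a ∘ 1_{fᵗ} = f_A(a)` for a bijection `f = e` -/
  map_eq_mul : ∀ {X Y : Type} [Finite X] [Finite Y] (e : X ≃ Y) (a : data.A X),
      data.mul (fun y : Y => some (e.symm y)) a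
        (fun x => data.map (equivFiberEquiv e.symm x) data.one) = data.map e a
namespace GenRing

variable (R : GenRing)

/-- An `h`-ideal of a generalized ring: a subset `I ⊆ A_{[1]}` such that
`(b ∘ c, d) ∈ I` for all finite `X`, all `b, d ∈ A_X` and all `c ∈ I^X ⊆ (A_{[1]})^X`. -/
def IsHIdeal (I : Set (R.data.A (Fin 1))) : Prop :=
  ∀ (X : Type) [Finite X], ∀ (b d : R.data.A X) (c : X → R.data.A (Fin 1)),
    (∀ x, c x ∈ I) → R.data.pair (R.data.ract b c) d ∈ I

/-- A prime of a generalized ring: a proper `h`-ideal `P` whose complement is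
closed under the multiplication of `A_{[1]}`. -/
def IsPrimeH (P : Set (R.data.A (Fin 1))) : Prop :=
  R.IsHIdeal P ∧ R.data.one ∉ P ∧
    ∀ a b : R.data.A (Fin 1), R.data.op a b ∈ P → a ∈ P ∨ b ∈ P

end GenRing

/-- The spectrum of a generalized ring: the set of its primes. -/
structure SpecG (R : GenRing) where
  /-- the underlying prime `h`-ideal -/
  I : Set (R.data.A (Fin 1))
  /-- it is prime -/
  prime : R.IsPrimeH I

namespace GenRing

variable (R : GenRing)

/-- The basic open set `D_a = {𝔭 : a ∉ 𝔭}` of the Zariski topology. -/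
def basicOpen (a : R.data.A (Fin 1)) : Set (SpecG R) := {p | a ∉ p.I}

/-- The closed set `V(s) = {𝔭 : 𝔭 ⊇ s}` of the Zariski topology. -/
def zeroLocus (s : Set (R.data.A (Fin 1))) : Set (SpecG R) := {p | s ⊆ p.I}

/-- The Zariski topology on the spectrum, generated by the basic open sets. -/
instance : TopologicalSpace (SpecG R) :=
  TopologicalSpace.generateFrom {U | ∃ a : R.data.A (Fin 1), U = R.basicOpen a}

end GenRing

/-- A homomorphism of generalized rings: a (pointed, natural) family of maps
preserving multiplication, contraction and the unit. -/
structure GenRingHom (R S : GenRing) where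
  /-- the underlying family of maps -/
  app : (X : Type) → [inst : Finite X] → R.data.A X → S.data.A X
  /-- zero is preserved -/
  app_zero : ∀ (X : Type) [Finite X], app X (R.data.zero X) = S.data.zero X
  /-- the unit is preserved -/
  app_one : app (Fin 1) R.data.one = S.data.one
  /-- naturality with respect to bijections -/
  app_map : ∀ {X Y : Type} [Finite X] [Finite Y] (e : X ≃ Y) (a : R.data.A X),
      app Y (R.data.map e a) = S.data.map e (app X a)
  /-- multiplication is preserved -/
  app_mul : ∀ {X Y : Type} [Finite X] [Finite Y] (f : X → Option Y)
      (a : R.data.A Y) (b : (y : Y) → R.data.A (pfib f y)),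
      app X (R.data.mul f a b) = S.data.mul f (app Y a) (fun y => app (pfib f y) (b y))
  /-- contraction is preserved -/
  app_contr : ∀ {X Y : Type} [Finite X] [Finite Y] (f : X → Option Y)
      (a : R.data.A X) (b : (y : Y) → R.data.A (pfib f y)),
      app Y (R.data.contr f a b) = S.data.contr f (app X a) (fun y => app (pfib f y) (b y))

namespace GenRingHom

variable {R S : GenRing} (φ : GenRingHom R S)

theorem app_op (a b : R.data.A (Fin 1)) :
    φ.app (Fin 1) (R.data.op a b) = S.data.op (φ.app (Fin 1) a) (φ.app (Fin 1) b) := by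
  unfold GenRingData.op
  rw [φ.app_mul]
  congr 1
  funext z
  rw [φ.app_map]

theorem app_ract {X : Type} [Finite X] (b : R.data.A X) (c : X → R.data.A (Fin 1)) :
    φ.app X (R.data.ract b c) = S.data.ract (φ.app X b) (fun x => φ.app (Fin 1) (c x)) := by
  unfold GenRingData.ract
  rw [φ.app_mul]
  congr 1
  funext x
  rw [φ.app_map]

theorem app_pair {X : Type} [Finite X] (a d : R.data.A X) :
    φ.app (Fin 1) (R.data.pair a d) = S.data.pair (φ.app X a) (φ.app X d) := by
  unfold GenRingData.pair
  rw [φ.app_contr]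
  congr 1
  funext z
  rw [φ.app_map]

theorem app_lact {X : Type} [Finite X] (s : R.data.A (Fin 1)) (a : R.data.A X) :
    φ.app X (R.data.lact s a) = S.data.lact (φ.app (Fin 1) s) (φ.app X a) := by
  unfold GenRingData.lact
  rw [φ.app_mul]
  congr 1
  funext z
  rw [φ.app_map]

/-- The map `spec(φ) : spec(S) → spec(R)`, `𝔮 ↦ φ_{[1]}⁻¹(𝔮)`, induced by a
homomorphism of generalized rings `φ : R → S`. -/
def specMap (q : SpecG S) : SpecG R where
  I := φ.app (Fin 1) ⁻¹' q.I
  prime := by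
    refine ⟨?_, ?_, ?_⟩
    · intro X _ b d c hc
      show φ.app (Fin 1) (R.data.pair (R.data.ract b c) d) ∈ q.I
      rw [φ.app_pair, φ.app_ract]
      exact q.prime.1 X (φ.app X b) (φ.app X d) (fun x => φ.app (Fin 1) (c x)) hc
    · show φ.app (Fin 1) R.data.one ∉ q.I
      rw [φ.app_one]
      exact q.prime.2.1
    · intro a b hab
      have h : S.data.op (φ.app (Fin 1) a) (φ.app (Fin 1) b) ∈ q.I := by
        rw [← φ.app_op]; exact hab
      exact q.prime.2.2 _ _ h

end GenRingHom

/-- An equivalence ideal of a generalized ring: a family of equivalence relations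
on the sets `A_X` respecting the operations of multiplication and contraction. -/
structure EqvIdeal (R : GenRing) where
  /-- the family of relations -/
  rel : (X : Type) → [inst : Finite X] → R.data.A X → R.data.A X → Prop
  refl : ∀ (X : Type) [Finite X] (a : R.data.A X), rel X a a
  symm : ∀ (X : Type) [Finite X] {a b : R.data.A X}, rel X a b → rel X b a
  trans : ∀ (X : Type) [Finite X] {a b c : R.data.A X}, rel X a b → rel X b c → rel X a c
  /-- `a ∼ a'` implies `a ∘ b ∼ a' ∘ b` -/
  mul_left : ∀ {X Y : Type} [Finite X] [Finite Y] (f : X → Option Y) {a a' : R.data.A Y}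
      (b : (y : Y) → R.data.A (pfib f y)),
      rel Y a a' → rel X (R.data.mul f a b) (R.data.mul f a' b)
  /-- `b ∼ b'` (componentwise) implies `a ∘ b ∼ a ∘ b'` -/
  mul_right : ∀ {X Y : Type} [Finite X] [Finite Y] (f : X → Option Y) (a : R.data.A Y)
      {b b' : (y : Y) → R.data.A (pfib f y)},
      (∀ y, rel (pfib f y) (b y) (b' y)) → rel X (R.data.mul f a b) (R.data.mul f a b')
  /-- `a ∼ a'` implies `(a, b) ∼ (a', b)` -/
  contr_left : ∀ {X Y : Type} [Finite X] [Finite Y] (f : X → Option Y) {a a' : R.data.A X}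
      (b : (y : Y) → R.data.A (pfib f y)),
      rel X a a' → rel Y (R.data.contr f a b) (R.data.contr f a' b)
  /-- `b ∼ b'` (componentwise) implies `(a, b) ∼ (a, b')` -/
  contr_right : ∀ {X Y : Type} [Finite X] [Finite Y] (f : X → Option Y) (a : R.data.A X)
      {b b' : (y : Y) → R.data.A (pfib f y)},
      (∀ y, rel (pfib f y) (b y) (b' y)) → rel Y (R.data.contr f a b) (R.data.contr f a b')

namespace GenRing

variable (R : GenRing)

/-- The equivalence ideal `E(I)` generated by an (`h`-)ideal `I`: `a ∼ b` iff the
pair `(a, b)` belongs to every equivalence ideal containing `(i, 0)` for all `i ∈ I`. -/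
def erel (I : Set (R.data.A (Fin 1))) (X : Type) [Finite X] (a b : R.data.A X) : Prop :=
  ∀ ε : EqvIdeal R, (∀ i ∈ I, ε.rel (Fin 1) i (R.data.zero (Fin 1))) → ε.rel X a b

/-- A stable `h`-ideal: an `h`-ideal `I` such that for every pair `(a, b)` in the
equivalence ideal `E(I)` generated by `I` one has `a ∈ I ↔ b ∈ I`. -/
def IsStableHIdeal (I : Set (R.data.A (Fin 1))) : Prop :=
  R.IsHIdeal I ∧ ∀ a b : R.data.A (Fin 1), R.erel I (Fin 1) a b → (a ∈ I ↔ b ∈ I)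

/-- A multiplicative subset of `A_{[1]}`: contains `1`, closed under `∘`,
and stable under the involution. -/
def IsMulSet (S : Set (R.data.A (Fin 1))) : Prop :=
  R.data.one ∈ S ∧ (∀ a ∈ S, ∀ b ∈ S, R.data.op a b ∈ S) ∧
    (∀ a, a ∈ S ↔ R.data.adj a ∈ S)

/-- `φ : R → L` presents `L` as the localization `S⁻¹R` of `R` at the
multiplicative subset `S ⊆ A_{[1]}`: every element of `S` becomes invertible, every
element of `L` is a fraction `φ(a)/φ(s)`, and `φ(a) = φ(b)` iff `s ∘ a = s ∘ b`
for some `s ∈ S`. -/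
def IsLocalizationAt (S : Set (R.data.A (Fin 1))) {L : GenRing} (φ : GenRingHom R L) : Prop :=
  (∀ s ∈ S, ∃ t : L.data.A (Fin 1),
      L.data.op t (φ.app (Fin 1) s) = L.data.one ∧
      L.data.op (φ.app (Fin 1) s) t = L.data.one) ∧
  (∀ (X : Type) [Finite X], ∀ l : L.data.A X, ∃ (a : R.data.A X) (s : R.data.A (Fin 1)),
      s ∈ S ∧ L.data.lact (φ.app (Fin 1) s) l = φ.app X a) ∧
  (∀ (X : Type) [Finite X], ∀ a b : R.data.A X,
      φ.app X a = φ.app X b ↔ ∃ s ∈ S, R.data.lact s a = R.data.lact s b)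

end GenRing


-- ===== AUX START =====
section Aux
open GenRingData

variable {R : GenRing}

/-- Equality of equivs into a subsingleton. -/
theorem eqv_ss {α β : Type} [Subsingleton β] (e e' : α ≃ β) : e = e' :=
  Equiv.ext fun _ => Subsingleton.elim _ _

theorem eqv_ss' {α β : Type} (h : Subsingleton β) (e e' : α ≃ β) : e = e' :=
  @eqv_ss α β h e e'

theorem map_eqv {X Y : Type} [Finite X] [Finite Y] {e e' : X ≃ Y} (h : e = e')
    (a : R.data.A X) : R.data.map e a = R.data.map e' a := by rw [h]

theorem map_map {X Y Z : Type} [Finite X] [Finite Y] [Finite Z] (e : X ≃ Y) (e' : Y ≃ Z)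
    (a : R.data.A X) : R.data.map e' (R.data.map e a) = R.data.map (e.trans e') a :=
  (R.map_trans e e' a).symm

theorem map_symm_map {X Y : Type} [Finite X] [Finite Y] (e : X ≃ Y) (a : R.data.A X) :
    R.data.map e.symm (R.data.map e a) = a := by
  rw [map_map, show e.trans e.symm = Equiv.refl X from Equiv.self_trans_symm e, R.map_refl]

/-- subsingleton criterion for fibers -/
theorem pfib_ss {X Y : Type} {f : X → Option Y}
    (h : ∀ x₁ x₂ (y : Y), f x₁ = some y → f x₂ = some y → x₁ = x₂) (y : Y) :
    Subsingleton (pfib f y) :=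
  ⟨fun a b => Subtype.ext (h _ _ _ a.2 b.2)⟩

theorem pfib_id_ss {X : Type} (y : X) : Subsingleton (pfib (fun x : X => some x) y) :=
  pfib_ss (fun _ _ _ h1 h2 => (Option.some.inj h1).trans (Option.some.inj h2).symm) y

theorem fin1_fam_eq {C : Fin 1 → Sort*} {F G : (z : Fin 1) → C z} (h : F 0 = G 0) : F = G :=
  funext fun z => by
    have hz : z = 0 := Subsingleton.elim _ _
    subst hz; exact h

/-- fiber equivalence along an equality of partial maps -/
def pfC {X Y : Type} {f g : X → Option Y} (h : f = g) (y : Y) : pfib f y ≃ pfib g y where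
  toFun q := ⟨q.1, by rw [← h]; exact q.2⟩
  invFun q := ⟨q.1, by rw [h]; exact q.2⟩
  left_inv q := rfl
  right_inv q := rfl

theorem pfC_rfl {X Y : Type} (f : X → Option Y) (y : Y) :
    pfC (rfl : f = f) y = Equiv.refl _ := Equiv.ext fun _ => rfl

theorem mul_congr {X Y : Type} [Finite X] [Finite Y] {f g : X → Option Y} (h : f = g)
    (a : R.data.A Y) (b : (y : Y) → R.data.A (pfib f y)) :
    R.data.mul f a b = R.data.mul g a (fun y => R.data.map (pfC h y) (b y)) := by
  subst h
  congr 1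
  funext y
  rw [pfC_rfl, R.map_refl]

theorem contr_congr {X Y : Type} [Finite X] [Finite Y] {f g : X → Option Y} (h : f = g)
    (a : R.data.A X) (b : (y : Y) → R.data.A (pfib f y)) :
    R.data.contr f a b = R.data.contr g a (fun y => R.data.map (pfC h y) (b y)) := by
  subst h
  congr 1
  funext y
  rw [pfC_rfl, R.map_refl]

/-- evaluation of `atilde` -/
theorem atilde_eq {X Y Z : Type} [Finite X] [Finite Y] [Finite Z]
    (g : Z → Option Y) (f : X → Option Y) (a : (y : Y) → R.data.A (pfib g y))
    {x : X} {y : Y} (h : f x = some y) :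
    R.data.atilde g f a x = R.data.map (fpFiberSnd g f h) (a y) := by
  unfold GenRingData.atilde
  split
  · rename_i y' h'
    have hy : y' = y := Option.some.inj (h'.symm.trans h)
    subst hy
    rfl
  · rename_i h'
    rw [h'] at h
    exact absurd h (by simp)

theorem ctilde_eq {X Y Z : Type} [Finite X] [Finite Y] [Finite Z]
    (g : Z → Option Y) (f : X → Option Y) (c : (y : Y) → R.data.A (pfib f y))
    {z : Z} {y : Y} (h : g z = some y) :
    R.data.ctilde g f c z = R.data.map (fpFiberFst g f h) (c y) := by
  unfold GenRingData.ctilde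
  split
  · rename_i y' h'
    have hy : y' = y := Option.some.inj (h'.symm.trans h)
    subst hy
    rfl
  · rename_i h'
    rw [h'] at h
    exact absurd h (by simp)

theorem ctilde_none {X Y Z : Type} [Finite X] [Finite Y] [Finite Z]
    (g : Z → Option Y) (f : X → Option Y) (c : (y : Y) → R.data.A (pfib f y))
    {z : Z} (h : g z = none) :
    R.data.ctilde g f c z = R.data.zero _ := by
  unfold GenRingData.ctilde
  split
  · rename_i y' h'
    rw [h'] at h
    exact absurd h (by simp)
  · rfl

theorem resMap_eq {X Y Z : Type} (g : Y → Option Z) (f : X → Option Y) (z : Z)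
    (q : pfib (pcomp g f) z) {y : Y} (h : f q.1 = some y) (hg : g y = some z) :
    resMap g f z q = some ⟨y, hg⟩ := by
  unfold resMap
  rw [h]
  simp only [Option.bind_some]
  rw [dif_pos hg]

/-- `mul` along a constant map to `Fin 1` with head `1` collapses. -/
theorem mul_const_one {W : Type} [Finite W]
    (c : (z : Fin 1) → R.data.A (pfib (fun _ : W => some (0 : Fin 1)) z)) :
    R.data.mul (fun _ : W => some (0 : Fin 1)) R.data.one c
      = R.data.map (constFiberEquiv W 0).symm (c 0) := by
  have h : c = fun z => R.data.map (constFiberEquiv W z)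
      (R.data.map (constFiberEquiv W 0).symm (c 0)) := by
    apply fin1_fam_eq
    rw [map_map, show ((constFiberEquiv W 0).symm.trans (constFiberEquiv W 0)) = Equiv.refl _
      from Equiv.symm_trans_self _, R.map_refl]
  conv_lhs => rw [h]
  exact R.one_lact W _


/-- graph fibers are subsingletons for injective maps -/
theorem graph_fib_ss {W V : Type} (φ : W → V) (hφ : Function.Injective φ) (v : V) :
    Subsingleton (pfib (fun w => some (φ w)) v) :=
  pfib_ss (fun a b y h1 h2 => hφ (by
    have := (Option.some.inj h1).trans (Option.some.inj h2).symm
    exact this)) v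

/-- flexible form of `map_eq_mul` -/
theorem mul_graph_units {X Y : Type} [Finite X] [Finite Y] (e : X ≃ Y) (a : R.data.A X)
    (u : (x : X) → R.data.A (pfib (fun y : Y => some (e.symm y)) x))
    (hu : ∀ x, u x = R.data.map (equivFiberEquiv e.symm x) R.data.one) :
    R.data.mul (fun y : Y => some (e.symm y)) a u = R.data.map e a := by
  rw [← R.map_eq_mul e a]
  congr 1
  funext x
  rw [hu]

/-- flexible form of `map_eq_contr` -/
theorem contr_graph_units {X Y : Type} [Finite X] [Finite Y] (e : X ≃ Y) (a : R.data.A X)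
    (u : (y : Y) → R.data.A (pfib (fun x : X => some (e x)) y))
    (hu : ∀ y, u y = R.data.map (equivFiberEquiv e y) R.data.one) :
    R.data.contr (fun x : X => some (e x)) a u = R.data.map e a := by
  rw [← R.map_eq_contr e a]
  congr 1
  funext y
  rw [hu]

/-- fibers of `g ∘ e` vs fibers of `g`, for a bijection `e`. -/
def fibE {X' X Y : Type} (e : X' ≃ X) (g : X → Option Y) (y : Y) :
    pfib (fun x' => g (e x')) y ≃ pfib g y where
  toFun q := ⟨e q.1, q.2⟩
  invFun p := ⟨e.symm p.1, by show g (e (e.symm p.1)) = some y; rw [e.apply_symm_apply]; exact p.2⟩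
  left_inv q := Subtype.ext (e.symm_apply_apply q.1)
  right_inv p := Subtype.ext (e.apply_symm_apply p.1)

theorem resMap_graph (e : X' ≃ X) {Y : Type} (g : X → Option Y) (y : Y) :
    resMap g (fun x' => some (e x')) y = fun q => some ((fibE e g y) q) := by
  funext q
  exact resMap_eq g _ y q rfl q.2

/-- collapse of `econtr` along a bijection graph with unit family -/
theorem econtr_graph_units {X' X Y : Type} [Finite X'] [Finite X] [Finite Y]
    (e : X' ≃ X) (g : X → Option Y)
    (a : (y : Y) → R.data.A (pfib (pcomp g (fun x' => some (e x'))) y))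
    (u : (x : X) → R.data.A (pfib (fun x' : X' => some (e x')) x))
    (hu : ∀ x, u x = R.data.map (equivFiberEquiv e x) R.data.one) (y : Y) :
    R.data.econtr g (fun x' => some (e x')) a u y = R.data.map (fibE e g y) (a y) := by
  show R.data.contr (resMap g (fun x' => some (e x')) y) (a y) _ = _
  rw [contr_congr (resMap_graph e g y)]
  haveI : ∀ p, Subsingleton (pfib (fun q => some ((fibE e g y) q)) p) :=
    graph_fib_ss _ (Equiv.injective _)
  apply contr_graph_units (fibE e g y) (a y)
  intro p
  rw [hu, map_map, map_map]
  exact map_eqv (eqv_ss' (this p) _ _) _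

/-- source-naturality of `mul` along a bijection -/
theorem natX_mul {X' X Y : Type} [Finite X'] [Finite X] [Finite Y]
    (e : X' ≃ X) (g : X → Option Y) (d : R.data.A Y)
    (a : (y : Y) → R.data.A (pfib (pcomp g (fun x' => some (e x'))) y)) :
    R.data.map e (R.data.mul (pcomp g (fun x' => some (e x'))) d a)
      = R.data.mul g d (fun y => R.data.map (fibE e g y) (a y)) := by
  have key := R.left_lin g (fun x' => some (e x')) d a
    (fun x => R.data.map (equivFiberEquiv e x) R.data.one)
  rw [R.map_eq_contr e] at key
  rw [key]
  congr 1
  funext y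
  exact econtr_graph_units e g a _ (fun _ => rfl) y

/-- source-naturality of `contr` along a bijection -/
theorem natX_contr {X' X Y : Type} [Finite X'] [Finite X] [Finite Y]
    (e : X ≃ X') (g : X → Option Y) (d : R.data.A X)
    (a : (y : Y) → R.data.A (pfib (pcomp g (fun x' => some (e.symm x'))) y)) :
    R.data.contr (pcomp g (fun x' => some (e.symm x'))) (R.data.map e d) a
      = R.data.contr g d (fun y => R.data.map (fibE e.symm g y) (a y)) := by
  have key := R.right_adj g (fun x' => some (e.symm x')) d a
    (fun x => R.data.map (equivFiberEquiv e.symm x) R.data.one)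
  rw [R.map_eq_mul e d] at key
  rw [key]
  congr 1
  funext y
  exact econtr_graph_units e.symm g a _ (fun _ => rfl) y


/-- naturality of `lact` under bijections -/
theorem lact_map {W' W : Type} [Finite W'] [Finite W] (E : W' ≃ W) (t : R.data.A (Fin 1))
    (γ : R.data.A W') :
    R.data.map E (R.data.lact t γ) = R.data.lact t (R.data.map E γ) := by
  have key := natX_mul (R := R) E (fun _ : W => some (0 : Fin 1)) t
    (fun z => R.data.map (constFiberEquiv W' z) γ)
  rw [show (R.data.map E (R.data.lact t γ)) = R.data.map E
    (R.data.mul (pcomp (fun _ : W => some (0 : Fin 1)) (fun x' => some (E x'))) t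
      (fun z => R.data.map (constFiberEquiv W' z) γ)) from rfl, key]
  show R.data.mul _ t _ = R.data.mul _ t _
  congr 1
  funext z
  erw [map_map, map_map]
  have he : ((constFiberEquiv W' z).trans (fibE E (fun _ : W => some (0 : Fin 1)) z))
      = E.trans (constFiberEquiv W z) := Equiv.ext fun w' => Subtype.ext rfl
  exact map_eqv he γ

/-- the equivalence of `W` with the fiber of a constant partial map -/
def constEquiv {W V : Type} (ρ : W → Option V) {v₀ : V} (hρ : ∀ w, ρ w = some v₀) :
    W ≃ pfib ρ v₀ where
  toFun w := ⟨w, hρ w⟩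
  invFun q := q.1
  left_inv w := rfl
  right_inv q := rfl

/-- equivalence `FP g f ≃ W` when both structure maps are constant-like -/
def fpConstEquiv {W V : Type} (ρ : W → Option V) (eV : Fin 1 ≃ V)
    (hρ : ∀ w, ρ w = some (eV 0)) :
    FP ρ (fun z : Fin 1 => some (eV z)) ≃ W where
  toFun p := p.1.1
  invFun w := ⟨(w, 0), ⟨eV 0, hρ w, rfl⟩⟩
  left_inv p := Subtype.ext (Prod.ext rfl (Subsingleton.elim _ _))
  right_inv w := rfl

/-- **U1**: collapse of `mul` along a map to a singleton, with scalar head. -/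
theorem U1 {W V : Type} [Finite W] [Finite V] [Subsingleton V] (eV : Fin 1 ≃ V)
    (ρ : W → Option V) (hρ : ∀ w, ρ w = some (eV 0)) (σ : R.data.A (Fin 1))
    (c : (v : V) → R.data.A (pfib ρ v)) :
    R.data.mul ρ (R.data.map eV σ) c
      = R.data.lact σ (R.data.map (constEquiv ρ hρ).symm (c (eV 0))) := by
  have key := R.right_lin ρ (fun z : Fin 1 => some (eV z)) σ c
    (fun v => R.data.map (equivFiberEquiv eV v) R.data.one)
  rw [R.map_eq_contr eV σ] at key
  rw [key]
  -- now handle the RHS of right_lin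
  have hSnd : fpSnd ρ (fun z : Fin 1 => some (eV z))
      = fun _ : FP ρ (fun z : Fin 1 => some (eV z)) => some (0 : Fin 1) :=
    funext fun p => congrArg some (Subsingleton.elim _ _)
  set φF := fpConstEquiv ρ eV hρ with hφF
  set χ := ((fpFiberSnd ρ (fun z : Fin 1 => some (eV z))
      (rfl : (fun z : Fin 1 => some (eV z)) 0 = some (eV 0))).trans (pfC hSnd 0)).trans
      (constFiberEquiv (FP ρ (fun z : Fin 1 => some (eV z))) 0).symm with hχ
  have hhead : R.data.mul (fpSnd ρ (fun z : Fin 1 => some (eV z))) σ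
      (R.data.atilde ρ (fun z : Fin 1 => some (eV z)) c)
      = R.data.lact σ (R.data.map χ (c (eV 0))) := by
    rw [mul_congr hSnd]
    show R.data.mul _ σ _ = R.data.mul _ σ _
    congr 1
    apply fin1_fam_eq
    rw [atilde_eq ρ (fun z : Fin 1 => some (eV z)) c
      (rfl : (fun z : Fin 1 => some (eV z)) 0 = some (eV 0))]
    rw [map_map, map_map]
    refine map_eqv ?_ _
    rw [hχ]
    simp only [Equiv.trans_assoc, Equiv.symm_trans_self, Equiv.trans_refl]
  rw [hhead]
  haveI hss : ∀ v, Subsingleton (pfib (fun p => some (φF p)) v) :=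
    graph_fib_ss _ (Equiv.injective _)
  have hunits : ∀ w, R.data.ctilde ρ (fun z : Fin 1 => some (eV z))
      (fun v => R.data.map (equivFiberEquiv eV v) R.data.one) w
      = R.data.map (equivFiberEquiv φF w) R.data.one := by
    intro w
    rw [ctilde_eq ρ (fun z : Fin 1 => some (eV z)) _ (hρ w), map_map]
    haveI : Subsingleton (pfib (fpFst ρ (fun z : Fin 1 => some (eV z))) w) :=
      pfib_ss (fun p₁ p₂ y h1 h2 => φF.injective
        (show φF p₁ = φF p₂ from (Option.some.inj h1).trans (Option.some.inj h2).symm)) w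
    exact map_eqv (eqv_ss _ _) _
  refine (contr_graph_units φF (R.data.lact σ (R.data.map χ (c (eV 0)))) _ hunits).trans ?_
  rw [lact_map, map_map]
  refine congrArg (R.data.lact σ) (map_eqv ?_ _)
  exact Equiv.ext fun q => rfl

/-- **U0**: same with head `1`. -/
theorem U0 {W V : Type} [Finite W] [Finite V] [Subsingleton V] (eV : Fin 1 ≃ V)
    (ρ : W → Option V) (hρ : ∀ w, ρ w = some (eV 0))
    (c : (v : V) → R.data.A (pfib ρ v)) :
    R.data.mul ρ (R.data.map eV R.data.one) c
      = R.data.map (constEquiv ρ hρ).symm (c (eV 0)) := by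
  rw [U1 eV ρ hρ R.data.one c]
  exact R.one_lact W _

/-- **U2**: collapse of `contr` along a map to a singleton. -/
theorem U2 {W V : Type} [Finite W] [Finite V] [Subsingleton V] (eV : Fin 1 ≃ V)
    (ρ : W → Option V) (hρ : ∀ w, ρ w = some (eV 0)) (δ : R.data.A W)
    (F : (v : V) → R.data.A (pfib ρ v)) :
    R.data.contr ρ δ F
      = R.data.map eV (R.data.pair δ (R.data.map (constEquiv ρ hρ).symm (F (eV 0)))) := by
  set δ' := R.data.map (constEquiv ρ hρ).symm (F (eV 0)) with hδ'
  have key := (R.left_adj (fun z : Fin 1 => some (eV z)) (fun _ : W => some (0 : Fin 1)) δ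
      (fun v => R.data.map (equivFiberEquiv eV v) R.data.one)
      (fun z => R.data.map (constFiberEquiv W z) δ')).trans
    (contr_graph_units eV _ _ (fun _ => rfl))
  have hfun : ρ = fun _ : W => some (eV 0) := funext hρ
  rw [contr_congr hfun]
  refine Eq.trans ?_ key
  refine congrArg (R.data.contr (fun _ : W => some (eV 0)) δ) ?_
  funext v
  have hv : eV 0 = v := Subsingleton.elim _ _
  subst hv
  show R.data.map (pfC hfun (eV 0)) (F (eV 0))
      = R.data.mul (resMap (fun z : Fin 1 => some (eV z)) (fun _ : W => some (0 : Fin 1)) (eV 0))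
        (R.data.map (equivFiberEquiv eV (eV 0)) R.data.one)
        (fun p => R.data.map (resFiberEquiv (fun z : Fin 1 => some (eV z))
            (fun _ : W => some (0 : Fin 1)) (eV 0) p)
          (R.data.map (constFiberEquiv W p.1) δ'))
  haveI : Subsingleton (pfib (fun z : Fin 1 => some (eV z)) (eV 0)) :=
    graph_fib_ss _ eV.injective _
  have hρ₂ : ∀ q : pfib (pcomp (fun z : Fin 1 => some (eV z)) (fun _ : W => some (0 : Fin 1))) (eV 0),
      resMap (fun z : Fin 1 => some (eV z)) (fun _ : W => some (0 : Fin 1)) (eV 0) q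
        = some ((equivFiberEquiv eV (eV 0)) 0) := by
    intro q
    rw [resMap_eq _ _ _ q rfl (rfl : (fun z : Fin 1 => some (eV z)) 0 = some (eV 0))]
    exact congrArg some (Subtype.ext (Subsingleton.elim _ _))
  rw [U0 (equivFiberEquiv eV (eV 0)) _ hρ₂]
  rw [hδ', map_map, map_map, map_map]
  refine map_eqv ?_ (F (eV 0))
  exact Equiv.ext fun q => Subtype.ext rfl


theorem pfib_fin1_ss {Y : Type} (f : Fin 1 → Option Y) (y : Y) : Subsingleton (pfib f y) :=
  pfib_ss (fun a b _ _ _ => Subsingleton.elim a b) y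

/-- right diagonal contraction by a scalar -/
def rc (R : GenRing) (t : R.data.A (Fin 1)) {X : Type} [Finite X] (γ : R.data.A X) :
    R.data.A X :=
  R.data.contr (fun x : X => some x) γ (fun x => R.data.map (idFiberEquiv x) t)

/-- right diagonal action by a scalar -/
def rd (R : GenRing) (t : R.data.A (Fin 1)) {X : Type} [Finite X] (γ : R.data.A X) :
    R.data.A X :=
  R.data.mul (fun x : X => some x) γ (fun x => R.data.map (idFiberEquiv x) t)

theorem rc_one_eq_adj (t : R.data.A (Fin 1)) : rc R t R.data.one = R.data.adj t := by
  have h : (fun z : Fin 1 => some z) = (fun _ : Fin 1 => some (0 : Fin 1)) :=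
    funext fun z => congrArg some (Subsingleton.elim _ _)
  show R.data.contr _ _ _ = _
  rw [contr_congr h]
  show R.data.contr _ _ _ = R.data.contr _ _ _
  congr 1
  funext z
  haveI := pfib_fin1_ss (fun _ : Fin 1 => some (0 : Fin 1)) z
  rw [map_map]
  exact map_eqv (eqv_ss _ _) _

/-- the equivalence `FP (const X) (id (Fin 1)) ≃ X` -/
def fpXEquiv (X : Type) : FP (fun _ : X => some (0 : Fin 1)) (fun z : Fin 1 => some z) ≃ X where
  toFun p := p.1.1
  invFun x := ⟨(x, 0), ⟨0, rfl, rfl⟩⟩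
  left_inv p := Subtype.ext (Prod.ext rfl (Subsingleton.elim _ _))
  right_inv x := rfl

/-- **RC2**: left action equals right diagonal contraction (self-adjoint case). -/
theorem lact_eq_rc (hsa : ∀ x : R.data.A (Fin 1), R.data.adj x = x)
    (t : R.data.A (Fin 1)) {X : Type} [Finite X] (γ : R.data.A X) :
    R.data.lact t γ = rc R t γ := by
  classical
  set cX : X → Option (Fin 1) := fun _ : X => some (0 : Fin 1) with hcX
  set ig : Fin 1 → Option (Fin 1) := fun z : Fin 1 => some z with hig
  have key := R.right_lin cX ig R.data.one (fun z => R.data.map (constFiberEquiv X z) γ)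
      (fun z => R.data.map (idFiberEquiv z) t)
  rw [show R.data.contr ig R.data.one (fun z => R.data.map (idFiberEquiv z) t)
      = R.data.adj t from rc_one_eq_adj t, hsa t] at key
  -- key : lact t γ = contr (fpFst cX ig) (mul (fpSnd cX ig) one ã) c̃
  set φX := fpXEquiv X with hφX
  -- collapse the head
  have hρ : ∀ p : FP cX ig, fpSnd cX ig p = some ((Equiv.refl (Fin 1)) 0) :=
    fun p => congrArg some (Subsingleton.elim _ _)
  have h2 := U1 (R := R) (Equiv.refl (Fin 1)) (fpSnd cX ig) hρ R.data.one
      (R.data.atilde cX ig (fun z => R.data.map (constFiberEquiv X z) γ))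
  rw [R.map_refl, R.one_lact] at h2
  rw [h2] at key
  simp only [Equiv.refl_apply] at key
  erw [atilde_eq cX ig _ (rfl : ig 0 = some 0), map_map, map_map] at key
  -- now key : lact t γ = contr (fpFst cX ig) (map chainH γ) c̃
  -- use source-naturality to finish
  have key2 := natX_contr (R := R) φX.symm (fun x : X => some x) γ
      (fun y => R.data.ctilde cX ig (fun z => R.data.map (idFiberEquiv z) t) y)
  -- identify the head of key2
  have hhead : R.data.map φX.symm γ
      = R.data.map ((constFiberEquiv X 0).trans
          ((fpFiberSnd cX ig (rfl : ig 0 = some 0)).trans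
          (constEquiv (fpSnd cX ig) hρ).symm)) γ := by
    refine map_eqv ?_ γ
    exact Equiv.ext fun x => Subtype.ext rfl
  rw [hhead] at key2
  show R.data.mul cX t (fun z => R.data.map (constFiberEquiv X z) γ) = rc R t γ
  rw [key]
  refine Eq.trans key2 ?_
  -- the two contractions agree definitionally up to family components
  refine congrArg (R.data.contr _ _) ?_
  funext y
  haveI := pfib_id_ss y
  erw [ctilde_eq cX ig _ (rfl : cX y = some 0), map_map, map_map]
  exact map_eqv (eqv_ss _ _) _


/-- invariance of the pairing under bijections -/
theorem pair_map {W₁ W₂ : Type} [Finite W₁] [Finite W₂] (E : W₁ ≃ W₂)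
    (α β : R.data.A W₁) :
    R.data.pair (R.data.map E α) (R.data.map E β) = R.data.pair α β := by
  have key := natX_contr (R := R) E (fun _ : W₁ => some (0 : Fin 1)) α
    (fun z => R.data.map (constFiberEquiv W₂ z) (R.data.map E β))
  refine Eq.trans key ?_
  show R.data.contr _ α _ = R.data.contr _ α _
  refine congrArg (R.data.contr _ α) ?_
  funext z
  erw [map_map, map_map]
  refine map_eqv ?_ β
  exact Equiv.ext fun w₁ => Subtype.ext (E.symm_apply_apply w₁)

/-- **RC3**: right diagonal action equals right diagonal contraction. -/
theorem rd_eq_rc (hsa : ∀ x : R.data.A (Fin 1), R.data.adj x = x)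
    (t : R.data.A (Fin 1)) {X : Type} [Finite X] (γ : R.data.A X) :
    rd R t γ = rc R t γ := by
  have key := R.right_adj (fun x : X => some x) (fun x : X => some x) γ
      (R.data.oneId X) (fun x => R.data.map (idFiberEquiv x) t)
  have key2 := (R.contr_one_id X (rd R t γ)).symm.trans key
  -- key2 : rd t γ = contr idg γ (econtr idg idg (oneId X) tdiag)
  refine key2.trans ?_
  refine congrArg (R.data.contr _ γ) ?_
  funext x
  haveI hss := pfib_id_ss x
  have hρ : ∀ q : pfib (pcomp (fun x : X => some x) (fun x : X => some x)) x,
      resMap (fun x : X => some x) (fun x : X => some x) x q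
        = some ((idFiberEquiv x) 0) := by
    intro q
    rw [resMap_eq _ _ _ q rfl q.2]
    exact congrArg some (Subtype.ext (Option.some.inj q.2))
  show R.data.contr (resMap (fun x : X => some x) (fun x : X => some x) x)
      (R.data.oneId X x) _ = _
  rw [show R.data.oneId X x = R.data.map (idFiberEquiv x) R.data.one from rfl]
  erw [U2 (idFiberEquiv x) _ hρ]
  -- the inner family value is a transport of t
  have hinner : ∀ (u : R.data.A (pfib (pcomp (fun x : X => some x) (fun x : X => some x)) x)),
      u = R.data.map (constEquiv _ hρ).symm
        ((fun p => R.data.map (resFiberEquiv (fun x : X => some x) (fun x : X => some x) x p)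
          (R.data.map (idFiberEquiv p.1) t)) ((idFiberEquiv x) 0)) → True := fun _ _ => trivial
  -- identify the pair argument with `t` via subsingleton equivalences and `hsa`
  rw [map_map, map_map]
  haveI : Subsingleton (pfib (pcomp (fun x : X => some x) (fun x : X => some x)) x) :=
    pfib_ss (fun a b y h1 h2 => by
      have ha : some a = some y := h1
      have hb : some b = some y := h2
      exact (Option.some.inj ha).trans (Option.some.inj hb).symm) x
  have h2 : R.data.map ((idFiberEquiv ((idFiberEquiv x) 0).1).trans
        ((resFiberEquiv (fun x : X => some x) (fun x : X => some x) x ((idFiberEquiv x) 0)).trans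
        (constEquiv (resMap (fun x : X => some x) (fun x : X => some x) x) hρ).symm)) t
      = R.data.map (idFiberEquiv x) t := map_eqv (eqv_ss _ _) t
  erw [h2, pair_map (idFiberEquiv x) R.data.one t]
  rw [show R.data.pair R.data.one t = R.data.adj t from rfl, hsa t]


/-- P1: `rc` pushes into the family slots of `mul`. -/
theorem rc_mul_fam {X Y : Type} [Finite X] [Finite Y] (t : R.data.A (Fin 1))
    (g : X → Option Y) (d : R.data.A Y) (a : (y : Y) → R.data.A (pfib g y)) :
    rc R t (R.data.mul g d a) = R.data.mul g d (fun y => rc R t (a y)) := by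
  have key := R.left_lin g (fun x : X => some x) d a (fun x => R.data.map (idFiberEquiv x) t)
  refine Eq.trans key ?_
  refine congrArg (R.data.mul g d) ?_
  funext y
  show R.data.contr (resMap g (fun x : X => some x) y) (a y) _ = _
  have hres : resMap g (fun x : X => some x) y = fun q => some q :=
    funext fun q => (resMap_eq g _ y q rfl q.2).trans (congrArg some (Subtype.ext rfl))
  erw [contr_congr hres]
  refine congrArg (R.data.contr _ (a y)) ?_
  funext p
  rw [map_map, map_map]
  exact map_eqv (eqv_ss' (pfib_id_ss p) _ _) _

/-- helper: value of `emul` along the identity with diagonal scalar family. -/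
theorem emul_id_tdiag {X Y : Type} [Finite X] [Finite Y] (G : X → Option Y)
    (t : R.data.A (Fin 1)) (b : (y : Y) → R.data.A (pfib G y)) (y : Y)
    (hcomp : pcomp (fun y : Y => some y) G = G) :
    R.data.map (pfC hcomp y)
      (R.data.emul (fun y : Y => some y) G (fun z => R.data.map (idFiberEquiv z) t) b y)
      = R.data.lact t (b y) := by
  have hρ : ∀ q : pfib (pcomp (fun y : Y => some y) G) y,
      resMap (fun y : Y => some y) G y q = some ((idFiberEquiv y) 0) := by
    intro q
    have hq : G q.1 = some y := by
      have h2 := q.2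
      cases hGq : G q.1 with
      | none => rw [show pcomp (fun y : Y => some y) G q.1 = (G q.1).bind some from rfl, hGq] at h2; exact absurd h2 (by simp)
      | some v =>
        rw [show pcomp (fun y : Y => some y) G q.1 = (G q.1).bind some from rfl, hGq] at h2
        simp only [Option.bind_some] at h2
        exact h2
    exact resMap_eq _ _ y q hq rfl
  show R.data.map (pfC hcomp y)
      (R.data.mul (resMap (fun y : Y => some y) G y) (R.data.map (idFiberEquiv y) t) _) = _
  haveI : Subsingleton (pfib (fun y : Y => some y) y) := pfib_id_ss y
  rw [U1 (idFiberEquiv y) _ hρ t _]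
  rw [lact_map, map_map, map_map]
  have : ((resFiberEquiv (fun y : Y => some y) G y ((idFiberEquiv y) 0)).trans
      ((constEquiv (resMap (fun y : Y => some y) G y) hρ).symm.trans (pfC hcomp y)))
      = Equiv.refl (pfib G y) := Equiv.ext fun q => Subtype.ext rfl
  rw [this]
  show R.data.lact t (R.data.map (Equiv.refl _) (b y)) = _
  rw [R.map_refl]

theorem pcomp_id_left {X Y : Type} (G : X → Option Y) :
    pcomp (fun y : Y => some y) G = G := by
  funext x
  show (G x).bind some = G x
  cases G x <;> rfl

/-- P2: `rc` pushes onto the head of `mul`. -/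
theorem rc_mul_head (hsa : ∀ x : R.data.A (Fin 1), R.data.adj x = x)
    {X Y : Type} [Finite X] [Finite Y] (t : R.data.A (Fin 1))
    (g : X → Option Y) (d : R.data.A Y) (a : (y : Y) → R.data.A (pfib g y)) :
    rc R t (R.data.mul g d a) = R.data.mul g (rc R t d) a := by
  have hcomp := pcomp_id_left g
  have key := R.assoc (fun y : Y => some y) g d (fun z => R.data.map (idFiberEquiv z) t) a
  -- key : mul (pcomp idg g) d (emul idg g tdiag a) = mul g (rd t d) a
  have key2 : R.data.mul g (rd R t d) a
      = R.data.mul g d (fun y => R.data.lact t (a y)) := by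
    rw [show R.data.mul g (rd R t d) a
        = R.data.mul (pcomp (fun y : Y => some y) g) d
          (R.data.emul (fun y : Y => some y) g (fun z => R.data.map (idFiberEquiv z) t) a)
      from key.symm]
    rw [mul_congr hcomp]
    refine congrArg (R.data.mul g d) ?_
    funext y
    exact emul_id_tdiag g t a y hcomp
  rw [rc_mul_fam, ← rd_eq_rc hsa, key2]
  refine congrArg (R.data.mul g d) ?_
  funext y
  rw [lact_eq_rc hsa]

/-- P3: `rc` pushes into the family slots of `contr`. -/
theorem rc_contr_fam (hsa : ∀ x : R.data.A (Fin 1), R.data.adj x = x)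
    {X Y : Type} [Finite X] [Finite Y] (t : R.data.A (Fin 1))
    (g : X → Option Y) (d : R.data.A X) (c : (y : Y) → R.data.A (pfib g y)) :
    rc R t (R.data.contr g d c) = R.data.contr g d (fun y => rc R t (c y)) := by
  have hcomp := pcomp_id_left g
  have key := R.left_adj (fun y : Y => some y) g d (fun z => R.data.map (idFiberEquiv z) t) c
  -- key : contr (pcomp idg g) d (emul idg g tdiag c) = rc t (contr g d c)
  refine Eq.trans key.symm ?_
  rw [contr_congr hcomp]
  refine congrArg (R.data.contr g d) ?_
  funext y
  rw [emul_id_tdiag g t c y hcomp, lact_eq_rc hsa]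

/-- P4: `rc` pushes onto the head of `contr`. -/
theorem rc_contr_head (hsa : ∀ x : R.data.A (Fin 1), R.data.adj x = x)
    {X Y : Type} [Finite X] [Finite Y] (t : R.data.A (Fin 1))
    (g : X → Option Y) (d : R.data.A X) (c : (y : Y) → R.data.A (pfib g y)) :
    rc R t (R.data.contr g d c) = R.data.contr g (rc R t d) c := by
  have key := R.left_adj g (fun x : X => some x) d c (fun x => R.data.map (idFiberEquiv x) t)
  -- key : contr (pcomp g idg) d (emul g idg c tdiag) = contr g (rc t d) c
  rw [rc_contr_fam hsa]
  refine Eq.trans ?_ key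
  refine congrArg (R.data.contr g d) ?_
  funext y
  show rc R t (c y) = R.data.mul (resMap g (fun x : X => some x) y) (c y) _
  have hres : resMap g (fun x : X => some x) y = fun q => some q :=
    funext fun q => (resMap_eq g _ y q rfl q.2).trans (congrArg some (Subtype.ext rfl))
  rw [mul_congr hres]
  rw [← rd_eq_rc hsa]
  refine congrArg (R.data.mul _ (c y)) ?_
  funext p
  rw [map_map, map_map]
  exact (map_eqv (eqv_ss' (pfib_id_ss p) _ _) _).symm

/-- naturality of `rc` -/
theorem rc_map (hsa : ∀ x : R.data.A (Fin 1), R.data.adj x = x)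
    {X Y : Type} [Finite X] [Finite Y] (t : R.data.A (Fin 1)) (E : X ≃ Y)
    (γ : R.data.A X) :
    rc R t (R.data.map E γ) = R.data.map E (rc R t γ) := by
  rw [← lact_eq_rc hsa, ← lact_eq_rc hsa, lact_map]

theorem rc_zero (t : R.data.A (Fin 1)) (X : Type) [Finite X] :
    rc R t (R.data.zero X) = R.data.zero X := R.contr_zero_left _ _

/-- on scalars, `rc t` is left multiplication by `t`. -/
theorem rc_eq_op (hsa : ∀ x : R.data.A (Fin 1), R.data.adj x = x)
    (t σ : R.data.A (Fin 1)) : rc R t σ = R.data.op t σ := by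
  rw [← lact_eq_rc hsa]
  show R.data.mul _ t _ = R.data.mul _ t _
  have h : (fun _ : Fin 1 => some (0 : Fin 1)) = (fun z : Fin 1 => some z) :=
    funext fun z => congrArg some (Subsingleton.elim _ _)
  rw [mul_congr h]
  refine congrArg (R.data.mul _ t) ?_
  funext z
  rw [map_map]
  exact map_eqv (eqv_ss' (pfib_id_ss z) _ _) _


/-! ### scalar algebra -/

theorem rc_pair (τ σ : R.data.A (Fin 1)) : rc R τ σ = R.data.pair σ τ := by
  have h : (fun z : Fin 1 => some z) = (fun _ : Fin 1 => some (0 : Fin 1)) :=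
    funext fun z => congrArg some (Subsingleton.elim _ _)
  show R.data.contr _ _ _ = _
  rw [contr_congr h]
  refine congrArg (R.data.contr _ σ) ?_
  funext z
  rw [map_map]
  exact map_eqv (eqv_ss' (pfib_fin1_ss _ z) _ _) _

theorem op_one (σ : R.data.A (Fin 1)) : R.data.op σ R.data.one = σ :=
  R.mul_one_id (Fin 1) σ

theorem lact_eq_op (hsa : ∀ x : R.data.A (Fin 1), R.data.adj x = x) (σ τ : R.data.A (Fin 1)) : R.data.lact σ τ = R.data.op σ τ := by
  rw [lact_eq_rc hsa, rc_eq_op hsa]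

theorem one_op (hsa : ∀ x : R.data.A (Fin 1), R.data.adj x = x) (σ : R.data.A (Fin 1)) : R.data.op R.data.one σ = σ := by
  rw [← lact_eq_op hsa]
  exact R.one_lact (Fin 1) σ

theorem op_assoc (hsa : ∀ x : R.data.A (Fin 1), R.data.adj x = x) (u v w : R.data.A (Fin 1)) :
    R.data.op (R.data.op u v) w = R.data.op u (R.data.op v w) := by
  have key := rc_mul_head (R := R) hsa u (fun z : Fin 1 => some z) v
    (fun z => R.data.map (idFiberEquiv z) w)
  rw [rc_eq_op hsa, rc_eq_op hsa] at key
  exact key.symm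

theorem op_comm (hsa : ∀ x : R.data.A (Fin 1), R.data.adj x = x) (σ τ : R.data.A (Fin 1)) : R.data.op σ τ = R.data.op τ σ := by
  have h1 : R.data.op σ τ = R.data.pair σ τ := by
    have : τ = R.data.pair R.data.one τ := (hsa τ).symm
    rw [← rc_eq_op hsa]
    conv_lhs => rw [this]
    show rc R σ (R.data.contr _ _ _) = _
    rw [rc_contr_head hsa]
    show R.data.pair (rc R σ R.data.one) τ = _
    rw [rc_eq_op hsa, op_one]
  have h2 : R.data.op τ σ = R.data.pair σ τ := by
    rw [← rc_eq_op hsa, rc_pair]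
  rw [h1, h2]

theorem pair_one (hsa : ∀ x : R.data.A (Fin 1), R.data.adj x = x) (σ : R.data.A (Fin 1)) : R.data.pair σ R.data.one = σ := by
  rw [← rc_pair, rc_eq_op hsa, one_op hsa]

theorem op_zero_left (σ : R.data.A (Fin 1)) :
    R.data.op (R.data.zero (Fin 1)) σ = R.data.zero (Fin 1) :=
  R.mul_zero_left _ _

theorem op_zero_right (σ : R.data.A (Fin 1)) :
    R.data.op σ (R.data.zero (Fin 1)) = R.data.zero (Fin 1) := by
  show R.data.mul _ σ _ = _
  rw [show (fun z : Fin 1 => R.data.map (idFiberEquiv z) (R.data.zero (Fin 1)))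
    = fun z : Fin 1 => R.data.zero (pfib (fun z : Fin 1 => some z) z) from
    funext fun z => R.map_zero _]
  exact R.mul_zero_right _ σ

theorem opPow_add (hsa : ∀ x : R.data.A (Fin 1), R.data.adj x = x) (a : R.data.A (Fin 1)) (m n : ℕ) :
    R.data.opPow a (m + n) = R.data.op (R.data.opPow a m) (R.data.opPow a n) := by
  induction m with
  | zero => simp only [Nat.zero_add, GenRingData.opPow, one_op hsa]
  | succ k ih =>
    have : k + 1 + n = (k + n) + 1 := by omega
    rw [this]
    show R.data.op a (R.data.opPow a (k + n)) = _
    rw [ih, ← op_assoc hsa]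
    rfl

/-! ### h-ideal basics -/

theorem zero_mem_hideal {I : Set (R.data.A (Fin 1))} (hI : R.IsHIdeal I) :
    R.data.zero (Fin 1) ∈ I := by
  have h := hI Empty (R.data.zero Empty) (R.data.zero Empty)
    (fun x => x.elim) (fun x => x.elim)
  rwa [R.isEmpty_eq_zero Empty (R.data.ract (R.data.zero Empty) fun x => x.elim),
    show R.data.pair (R.data.zero Empty) (R.data.zero Empty)
      = R.data.zero (Fin 1) from R.contr_zero_left _ _] at h

theorem hideal_absorb (hsa : ∀ x : R.data.A (Fin 1), R.data.adj x = x)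
    {I : Set (R.data.A (Fin 1))} (hI : R.IsHIdeal I) (w : R.data.A (Fin 1))
    {i : R.data.A (Fin 1)} (hi : i ∈ I) : R.data.op w i ∈ I := by
  have h := hI (Fin 1) w R.data.one (fun _ => i) (fun _ => hi)
  rwa [show R.data.ract w (fun _ => i) = R.data.op w i from rfl, pair_one hsa] at h

/-- the set `{k | t ∘ k ∈ M}` is an h-ideal when `M` is -/
theorem NIdeal_hideal (hsa : ∀ x : R.data.A (Fin 1), R.data.adj x = x)
    {M : Set (R.data.A (Fin 1))} (hM : R.IsHIdeal M) (t : R.data.A (Fin 1)) :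
    R.IsHIdeal {k | R.data.op t k ∈ M} := by
  intro X _ b d c hc
  show R.data.op t (R.data.pair (R.data.ract b c) d) ∈ M
  rw [← rc_eq_op hsa]
  show rc R t (R.data.contr _ _ _) ∈ M
  rw [rc_contr_head hsa]
  show R.data.pair (rc R t (R.data.mul _ b _)) d ∈ M
  rw [rc_mul_fam]
  have hfam : (fun x => rc R t (R.data.map (idFiberEquiv x) (c x)))
      = fun x => R.data.map (idFiberEquiv x) (R.data.op t (c x)) := by
    funext x
    rw [rc_map hsa, rc_eq_op hsa]
  rw [hfam]
  exact hM X b d (fun x => R.data.op t (c x)) (fun x => hc x)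


/-! ### erel machinery -/

/-- `erel I` packaged as an equivalence ideal -/
def erelEqv (R : GenRing) (I : Set (R.data.A (Fin 1))) : EqvIdeal R where
  rel := R.erel I
  refl := by intro X _ a ε hε; exact ε.refl X a
  symm := by intro X _ a b h ε hε; exact ε.symm X (h ε hε)
  trans := by intro X _ a b c h h' ε hε; exact ε.trans X (h ε hε) (h' ε hε)
  mul_left := by intro X Y _ _ f a a' b h ε hε; exact ε.mul_left f b (h ε hε)
  mul_right := by intro X Y _ _ f a b b' h ε hε; exact ε.mul_right f a (fun y => h y ε hε)
  contr_left := by intro X Y _ _ f a a' b h ε hε; exact ε.contr_left f b (h ε hε)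
  contr_right := by intro X Y _ _ f a b b' h ε hε; exact ε.contr_right f a (fun y => h y ε hε)

theorem erel_of_mem {I : Set (R.data.A (Fin 1))} {i : R.data.A (Fin 1)} (hi : i ∈ I) :
    R.erel I (Fin 1) i (R.data.zero (Fin 1)) := fun _ hε => hε i hi

theorem erel_mono {I J : Set (R.data.A (Fin 1))} (hIJ : I ⊆ J) {X : Type} [Finite X]
    {a b : R.data.A X} (h : R.erel I X a b) : R.erel J X a b :=
  fun ε hε => h ε (fun i hi => hε i (hIJ hi))

/-- map-compatibility of any equivalence ideal -/
theorem eqvMap (ε : EqvIdeal R) {X Y : Type} [Finite X] [Finite Y] (e : X ≃ Y)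
    {a b : R.data.A X} (h : ε.rel X a b) :
    ε.rel Y (R.data.map e a) (R.data.map e b) := by
  have h2 := ε.mul_left (fun y : Y => some (e.symm y))
    (fun x => R.data.map (equivFiberEquiv e.symm x) R.data.one) h
  rwa [R.map_eq_mul e a, R.map_eq_mul e b] at h2

/-- the stable closure of an ideal -/
def cl (R : GenRing) (I : Set (R.data.A (Fin 1))) : Set (R.data.A (Fin 1)) :=
  {x | R.erel I (Fin 1) x (R.data.zero (Fin 1))}

theorem subset_cl {I : Set (R.data.A (Fin 1))} : I ⊆ cl R I := fun _ hi _ hε => hε _ hi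

theorem erel_cl_iff {I : Set (R.data.A (Fin 1))} {X : Type} [Finite X]
    {a b : R.data.A X} : R.erel (cl R I) X a b ↔ R.erel I X a b := by
  constructor
  · intro h ε hε
    exact h ε (fun i hi => hi ε hε)
  · intro h
    exact erel_mono subset_cl h

theorem cl_cl {I : Set (R.data.A (Fin 1))} : cl R (cl R I) = cl R I := by
  ext x
  exact erel_cl_iff

theorem cl_hideal (I : Set (R.data.A (Fin 1))) : R.IsHIdeal (cl R I) := by
  intro X _ b d c hc
  intro ε hε
  have h1 : ∀ x : X, ε.rel _ (R.data.map (idFiberEquiv x) (c x))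
      (R.data.zero (pfib (fun x' : X => some x') x)) := by
    intro x
    have h0 := eqvMap ε (idFiberEquiv x) (hc x ε hε)
    rwa [R.map_zero] at h0
  have h2 := ε.mul_right (fun x : X => some x) b h1
  rw [R.mul_zero_right] at h2
  have h3 := ε.contr_left (fun _ : X => some (0 : Fin 1))
    (fun z => R.data.map (constFiberEquiv X z) d) h2
  rwa [show R.data.contr (fun _ : X => some (0 : Fin 1)) (R.data.zero X)
      (fun z => R.data.map (constFiberEquiv X z) d) = R.data.zero (Fin 1) from
    R.contr_zero_left _ _] at h3

/-- equality as an equivalence ideal -/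
def eqEqv (R : GenRing) : EqvIdeal R where
  rel X _ a b := a = b
  refl := by intro X _ a; rfl
  symm := by intro X _ a b h; exact h.symm
  trans := by intro X _ a b c h h'; exact h.trans h'
  mul_left := by intro X Y _ _ f a a' b h; rw [h]
  mul_right := by intro X Y _ _ f a b b' h; rw [funext h]
  contr_left := by intro X Y _ _ f a a' b h; rw [h]
  contr_right := by intro X Y _ _ f a b b' h; rw [funext h]

theorem cl_zero : cl R {R.data.zero (Fin 1)} = {R.data.zero (Fin 1)} := by
  ext x
  constructor
  · intro h
    have h2 := h (eqEqv R) (fun i hi => by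
      show i = R.data.zero (Fin 1)
      exact hi)
    exact h2
  · intro h
    rw [show x = R.data.zero (Fin 1) from h]
    exact fun ε _ => ε.refl _ _

/-- the h-ideal generated by a set -/
def genIdeal (R : GenRing) (E : Set (R.data.A (Fin 1))) : Set (R.data.A (Fin 1)) :=
  ⋂₀ {I | R.IsHIdeal I ∧ E ⊆ I}

theorem genIdeal_hideal (E : Set (R.data.A (Fin 1))) : R.IsHIdeal (genIdeal R E) := by
  intro X _ b d c hc
  intro I hI
  exact hI.1 X b d c (fun x => hc x I hI)

theorem subset_genIdeal {E : Set (R.data.A (Fin 1))} : E ⊆ genIdeal R E :=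
  fun e he I hI => hI.2 he

theorem genIdeal_subset {E I : Set (R.data.A (Fin 1))} (hI : R.IsHIdeal I) (hE : E ⊆ I) :
    genIdeal R E ⊆ I := fun x hx => hx I ⟨hI, hE⟩

/-- the scalar-multiplication equivalence ideal -/
def scalarEqv (R : GenRing) (hsa : ∀ x : R.data.A (Fin 1), R.data.adj x = x)
    (t : R.data.A (Fin 1)) (M : Set (R.data.A (Fin 1))) : EqvIdeal R where
  rel X _ α β := R.erel M X (rc R t α) (rc R t β)
  refl := by intro X _ a; exact (erelEqv R M).refl X _
  symm := by intro X _ a b h; exact (erelEqv R M).symm X h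
  trans := by intro X _ a b c h h'; exact (erelEqv R M).trans X h h'
  mul_left := by
    intro X Y _ _ f a a' b h
    show R.erel M _ (rc R t (R.data.mul f a b)) (rc R t (R.data.mul f a' b))
    rw [rc_mul_head hsa, rc_mul_head hsa]
    exact (erelEqv R M).mul_left f b h
  mul_right := by
    intro X Y _ _ f a b b' h
    show R.erel M _ (rc R t (R.data.mul f a b)) (rc R t (R.data.mul f a b'))
    rw [rc_mul_fam, rc_mul_fam]
    exact (erelEqv R M).mul_right f a h
  contr_left := by
    intro X Y _ _ f a a' b h
    show R.erel M _ (rc R t (R.data.contr f a b)) (rc R t (R.data.contr f a' b))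
    rw [rc_contr_head hsa, rc_contr_head hsa]
    exact (erelEqv R M).contr_left f b h
  contr_right := by
    intro X Y _ _ f a b b' h
    show R.erel M _ (rc R t (R.data.contr f a b)) (rc R t (R.data.contr f a b'))
    rw [rc_contr_fam hsa, rc_contr_fam hsa]
    exact (erelEqv R M).contr_right f a h

/-- transport of `erel` along scalar multiplication -/
theorem erel_rc_transport (hsa : ∀ x : R.data.A (Fin 1), R.data.adj x = x)
    {M J : Set (R.data.A (Fin 1))} (t : R.data.A (Fin 1))
    (hgen : ∀ i ∈ J, R.data.op t i ∈ cl R M) {α β : R.data.A (Fin 1)}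
    (h : R.erel J (Fin 1) α β) :
    R.erel M (Fin 1) (rc R t α) (rc R t β) :=
  h (scalarEqv R hsa t M) (fun i hi => by
    show R.erel M _ (rc R t i) (rc R t (R.data.zero (Fin 1)))
    rw [rc_zero, rc_eq_op hsa]
    exact hgen i hi)


/-! ### chains and Zorn -/

theorem chain_bound {c : Set (Set (R.data.A (Fin 1)))} (hc : IsChain (· ⊆ ·) c)
    (hne : c.Nonempty) {Y : Type} [Finite Y] (f : Y → Set (R.data.A (Fin 1)))
    (hf : ∀ y, f y ∈ c) : ∃ I ∈ c, ∀ y, f y ⊆ I := by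
  rcases isEmpty_or_nonempty Y with h | h
  · obtain ⟨I, hI⟩ := hne
    exact ⟨I, hI, fun y => (h.elim y)⟩
  · obtain ⟨m, hm, hmax⟩ := Set.Finite.exists_maximalFor id _ (Set.finite_range f)
      (Set.range_nonempty f)
    obtain ⟨y₀, hy₀⟩ := hm
    have hmc : m ∈ c := hy₀ ▸ hf y₀
    refine ⟨m, hmc, fun y => ?_⟩
    rcases hc.total (hf y) hmc with h1 | h1
    · exact h1
    · exact hmax ⟨y, rfl⟩ h1

/-- the equivalence ideal associated to a nonempty chain of ideals -/
def chainEqv (R : GenRing) (c : Set (Set (R.data.A (Fin 1)))) (hc : IsChain (· ⊆ ·) c)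
    (hne : c.Nonempty) : EqvIdeal R where
  rel X _ α β := ∃ I ∈ c, R.erel I X α β
  refl := by
    intro X _ α
    obtain ⟨I, hI⟩ := hne
    exact ⟨I, hI, (erelEqv R I).refl X α⟩
  symm := by
    intro X _ α β ⟨I, hI, h⟩
    exact ⟨I, hI, (erelEqv R I).symm X h⟩
  trans := by
    intro X _ α β γ ⟨I, hI, h⟩ ⟨J, hJ, h'⟩
    rcases hc.total hI hJ with h1 | h1
    · exact ⟨J, hJ, (erelEqv R J).trans X (erel_mono h1 h) h'⟩
    · exact ⟨I, hI, (erelEqv R I).trans X h (erel_mono h1 h')⟩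
  mul_left := by
    intro X Y _ _ f α α' b ⟨I, hI, h⟩
    exact ⟨I, hI, (erelEqv R I).mul_left f b h⟩
  mul_right := by
    intro X Y _ _ f α b b' h
    choose g hg using h
    obtain ⟨I, hI, hsub⟩ := chain_bound hc hne g (fun y => (hg y).1)
    exact ⟨I, hI, (erelEqv R I).mul_right f α (fun y => erel_mono (hsub y) (hg y).2)⟩
  contr_left := by
    intro X Y _ _ f α α' b ⟨I, hI, h⟩
    exact ⟨I, hI, (erelEqv R I).contr_left f b h⟩
  contr_right := by
    intro X Y _ _ f α b b' h
    choose g hg using h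
    obtain ⟨I, hI, hsub⟩ := chain_bound hc hne g (fun y => (hg y).1)
    exact ⟨I, hI, (erelEqv R I).contr_right f α (fun y => erel_mono (hsub y) (hg y).2)⟩

theorem erel_sUnion {c : Set (Set (R.data.A (Fin 1)))} (hc : IsChain (· ⊆ ·) c)
    (hne : c.Nonempty) {x : R.data.A (Fin 1)}
    (h : R.erel (⋃₀ c) (Fin 1) x (R.data.zero (Fin 1))) :
    ∃ I ∈ c, R.erel I (Fin 1) x (R.data.zero (Fin 1)) := by
  refine h (chainEqv R c hc hne) ?_
  intro i hi
  obtain ⟨I, hI, hiI⟩ := hi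
  exact ⟨I, hI, erel_of_mem hiI⟩

/-- The key construction: a stable prime avoiding a non-nilpotent element -/
theorem main_construction (hsa : ∀ x : R.data.A (Fin 1), R.data.adj x = x)
    (a : R.data.A (Fin 1))
    (hnil : ¬∃ n, 0 < n ∧ R.data.opPow a n = R.data.zero (Fin 1)) :
    ∃ M : Set (R.data.A (Fin 1)), R.IsPrimeH M ∧ R.IsStableHIdeal M ∧ a ∉ M := by
  classical
  set S : Set (R.data.A (Fin 1)) := Set.range (R.data.opPow a) with hS
  -- S contains no zero
  have hS0 : ∀ s ∈ S, s ≠ R.data.zero (Fin 1) := by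
    rintro s ⟨n, rfl⟩ h0
    rcases Nat.eq_zero_or_pos n with hn | hn
    · subst hn
      -- 1 = 0 implies a is nilpotent
      apply hnil
      refine ⟨1, Nat.one_pos, ?_⟩
      show R.data.op a (R.data.opPow a 0) = _
      show R.data.op a R.data.one = _
      rw [show R.data.one = R.data.zero (Fin 1) from h0, op_zero_right]
    · exact hnil ⟨n, hn, h0⟩
  -- the poset of good ideals
  set good : Set (Set (R.data.A (Fin 1))) :=
    {I | R.IsHIdeal I ∧ ∀ x ∈ cl R I, x ∉ S} with hgood
  have hzero_good : {R.data.zero (Fin 1)} ∈ good := by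
    constructor
    · have := cl_hideal (R := R) {R.data.zero (Fin 1)}
      rwa [cl_zero] at this
    · intro x hx hxS
      rw [cl_zero] at hx
      exact hS0 x hxS hx
  -- Zorn
  have hub : ∀ c ⊆ good, IsChain (· ⊆ ·) c → c.Nonempty →
      ∃ ub ∈ good, ∀ s ∈ c, s ⊆ ub := by
    intro c hcg hc hne
    refine ⟨⋃₀ c, ⟨?_, ?_⟩, fun s hs => Set.subset_sUnion_of_mem hs⟩
    · intro X _ b d cf hcf
      choose g hg using fun x => hcf x
      obtain ⟨I, hIc, hsub⟩ := chain_bound hc hne g (fun x => (hg x).1)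
      exact Set.subset_sUnion_of_mem hIc ((hcg hIc).1 X b d cf (fun x => hsub x (hg x).2))
    · intro x hx hxS
      obtain ⟨I, hIc, hI⟩ := erel_sUnion hc hne hx
      exact (hcg hIc).2 x hI hxS
  obtain ⟨M, -, hMmax⟩ := zorn_subset_nonempty good hub _ hzero_good
  have hMgood : M ∈ good := hMmax.1
  have hMh : R.IsHIdeal M := hMgood.1
  -- M is closure-stable
  have hclM : cl R M = M := by
    have hclgood : cl R M ∈ good := by
      refine ⟨cl_hideal M, ?_⟩
      rw [show cl R (cl R M) = cl R M from cl_cl]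
      exact hMgood.2
    exact Set.Subset.antisymm (hMmax.2 hclgood subset_cl) subset_cl
  have hMS : ∀ x ∈ M, x ∉ S := fun x hx => hMgood.2 x (subset_cl hx)
  -- basic memberships
  have h1M : R.data.one ∉ M := fun h => hMS _ h ⟨0, rfl⟩
  have haM : a ∉ M := fun h => hMS _ h ⟨1, by
    show R.data.opPow a 1 = a
    show R.data.op a R.data.one = a
    exact op_one a⟩
  -- primality
  have hprime : ∀ x y : R.data.A (Fin 1), R.data.op x y ∈ M → x ∈ M ∨ y ∈ M := by
    intro x y hxy
    by_contra hcon
    push_neg at hcon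
    obtain ⟨hx, hy⟩ := hcon
    -- J = ideal generated by M and y; K = ideal generated by M and x
    have hJ : ∃ t ∈ S, t ∈ cl R (genIdeal R (insert y M)) := by
      by_contra hJ
      push_neg at hJ
      have : genIdeal R (insert y M) ∈ good :=
        ⟨genIdeal_hideal _, fun z hz hzS => hJ z hzS hz⟩
      have hsub : genIdeal R (insert y M) ⊆ M :=
        hMmax.2 this (subset_trans (Set.subset_insert y M) subset_genIdeal)
      exact hy (hsub (subset_genIdeal (Set.mem_insert y M)))
    obtain ⟨t, htS, htc⟩ := hJ
    -- op x t ∈ M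
    have hxt : R.data.op x t ∈ M := by
      have hgen : ∀ i ∈ genIdeal R (insert y M), R.data.op x i ∈ cl R M := by
        intro i hi
        refine subset_cl ?_
        refine genIdeal_subset (NIdeal_hideal hsa hMh x) ?_ hi
        intro z hz
        rcases Set.mem_insert_iff.mp hz with h | h
        · subst h; exact hxy
        · exact hideal_absorb hsa hMh x h
      have := erel_rc_transport hsa x hgen htc
      rw [rc_zero, rc_eq_op hsa] at this
      rw [← hclM]
      exact this
    -- now the same with K
    have hK : ∃ s ∈ S, s ∈ cl R (genIdeal R (insert x M)) := by
      by_contra hK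
      push_neg at hK
      have : genIdeal R (insert x M) ∈ good :=
        ⟨genIdeal_hideal _, fun z hz hzS => hK z hzS hz⟩
      have hsub : genIdeal R (insert x M) ⊆ M :=
        hMmax.2 this (subset_trans (Set.subset_insert x M) subset_genIdeal)
      exact hx (hsub (subset_genIdeal (Set.mem_insert x M)))
    obtain ⟨s, hsS, hsc⟩ := hK
    have hts : R.data.op t s ∈ M := by
      have hgen : ∀ i ∈ genIdeal R (insert x M), R.data.op t i ∈ cl R M := by
        intro i hi
        refine subset_cl ?_
        refine genIdeal_subset (NIdeal_hideal hsa hMh t) ?_ hi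
        intro z hz
        rcases Set.mem_insert_iff.mp hz with h | h
        · subst h
          show R.data.op t _ ∈ M
          rw [op_comm hsa]
          exact hxt
        · exact hideal_absorb hsa hMh t h
      have := erel_rc_transport hsa t hgen hsc
      rw [rc_zero, rc_eq_op hsa] at this
      rw [← hclM]
      exact this
    -- contradiction: op t s ∈ S
    obtain ⟨n, rfl⟩ := htS
    obtain ⟨m, rfl⟩ := hsS
    exact hMS _ hts ⟨n + m, opPow_add hsa a n m⟩
  refine ⟨M, ⟨hMh, h1M, hprime⟩, ⟨hMh, ?_⟩, haM⟩
  intro α β hrel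
  constructor
  · intro hα
    have : R.erel M (Fin 1) β (R.data.zero (Fin 1)) :=
      (erelEqv R M).trans _ ((erelEqv R M).symm _ hrel) (erel_of_mem hα)
    rw [← hclM]; exact this
  · intro hβ
    have : R.erel M (Fin 1) α (R.data.zero (Fin 1)) :=
      (erelEqv R M).trans _ hrel (erel_of_mem hβ)
    rw [← hclM]; exact this

/-- nilpotent elements lie in every prime -/
theorem mem_prime_of_nilpotent {P : Set (R.data.A (Fin 1))} (hP : R.IsPrimeH P)
    {a : R.data.A (Fin 1)} {n : ℕ} (hn : 0 < n)
    (h : R.data.opPow a n ∈ P) : a ∈ P := by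
  induction n with
  | zero => omega
  | succ k ih =>
    rcases hP.2.2 a (R.data.opPow a k) h with h1 | h1
    · exact h1
    · rcases Nat.eq_zero_or_pos k with h0 | hpos
      · subst h0
        exact absurd h1 hP.2.1
      · exact ih hpos h1

end Aux
-- ===== AUX END =====

/-- **Density of the stable spectrum.**  For a self-adjoint generalized ring `R`,
the set `ESpec(R)` of stable primes is dense in `spec(R)`: for every `a ∈ A_{[1]}`,
the basic open set `D_a` is empty if and only if `D_a ∩ ESpec(R)` is empty, both
being equivalent to `a` being nilpotent. -/
theorem stable_primes_dense (R : GenRing)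
    (hsa : ∀ x : R.data.A (Fin 1), R.data.adj x = x) (a : R.data.A (Fin 1)) :
    (R.basicOpen a = ∅ ↔
        {p : SpecG R | p ∈ R.basicOpen a ∧ R.IsStableHIdeal p.I} = ∅) ∧
      (R.basicOpen a = ∅ ↔ ∃ n, 0 < n ∧ R.data.opPow a n = R.data.zero (Fin 1)) := by
  by_cases hnil : ∃ n, 0 < n ∧ R.data.opPow a n = R.data.zero (Fin 1)
  · have hBO : R.basicOpen a = ∅ := by
      obtain ⟨n, hn, h0⟩ := hnil
      ext p
      simp only [Set.mem_empty_iff_false, iff_false]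
      intro hp
      refine hp (mem_prime_of_nilpotent p.prime hn ?_)
      rw [h0]
      exact zero_mem_hideal p.prime.1
    refine ⟨⟨fun _ => ?_, fun _ => hBO⟩, ⟨fun _ => hnil, fun _ => hBO⟩⟩
    ext p
    simp only [Set.mem_setOf_eq, Set.mem_empty_iff_false, iff_false]
    rintro ⟨hp, -⟩
    rw [hBO] at hp
    exact hp
  · obtain ⟨M, hprime, hstable, haM⟩ := main_construction hsa a hnil
    have hmem : (⟨M, hprime⟩ : SpecG R) ∈ R.basicOpen a := haM
    have hne1 : R.basicOpen a ≠ ∅ := by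
      intro h
      rw [h] at hmem
      exact hmem
    have hne2 : {p : SpecG R | p ∈ R.basicOpen a ∧ R.IsStableHIdeal p.I} ≠ ∅ := by
      intro h
      have hmem2 : (⟨M, hprime⟩ : SpecG R)
          ∈ {p : SpecG R | p ∈ R.basicOpen a ∧ R.IsStableHIdeal p.I} := ⟨hmem, hstable⟩
      rw [h] at hmem2
      exact hmem2
    exact ⟨iff_of_false hne1 hne2, iff_of_false hne1 hnil⟩

end
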